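/- Let M₁ ≥ f > M₂ ≥ 0 be real numbers, and let g₀ ∈ 𝒜(M₁,f,M₂) be given by g₀(t) = M₁ for 0 ≤ t ≤ c and g₀(t) = M₂ for c < t < 1, where c = (f − M₂)/(M₁ − M₂). If (gₙ) is a sequence in 𝒜(M₁,f,M₂) with limₙ I_{gₙ} = f + (f − M₂)·log((M₁ − M₂)/(f − M₂)), then gₙ → g₀ almost everywhere on [0,1), and also gₙ → g₀ in L¹([0,1)). -/

import Mathlib

open MeasureTheory Filter Set

noncomputable section

/-- `g` belongs to the class `𝒜(M₁, f, M₂)`: `g : [0,1) → [0,∞)` is decreasing,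
left continuous on `(0,1)`, continuous at `0`, with `g 0 = M₁`,
`lim_{t→1⁻} g t = M₂` and `∫₀¹ g = f`. -/
def memA (M₁ f M₂ : ℝ) (g : ℝ → ℝ) : Prop :=
  (∀ t ∈ Set.Ico (0 : ℝ) 1, 0 ≤ g t) ∧
  (∀ s ∈ Set.Ico (0 : ℝ) 1, ∀ t ∈ Set.Ico (0 : ℝ) 1, s ≤ t → g t ≤ g s) ∧
  (∀ t ∈ Set.Ioo (0 : ℝ) 1, Filter.Tendsto g (nhdsWithin t (Set.Iio t)) (nhds (g t))) ∧
  Filter.Tendsto g (nhdsWithin 0 (Set.Ioi 0)) (nhds (g 0)) ∧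
  g 0 = M₁ ∧
  Filter.Tendsto g (nhdsWithin 1 (Set.Iio 1)) (nhds M₂) ∧
  (∫ t in Set.Ioo (0 : ℝ) 1, g t) = f

/-- `I_g = ∫₀¹ ((1/t) ∫₀ᵗ g(u) du) dt`. -/
def Ig (g : ℝ → ℝ) : ℝ :=
  ∫ t in Set.Ioo (0 : ℝ) 1, (1 / t) * ∫ u in Set.Ioo (0 : ℝ) t, g u

section Aux
variable {M₁ f M₂ : ℝ} {g : ℝ → ℝ}

variable {M₁ f M₂ : ℝ} {g : ℝ → ℝ}

lemma memA_le_M₁ (h : memA M₁ f M₂ g) {t : ℝ} (ht : t ∈ Ico (0:ℝ) 1) : g t ≤ M₁ := by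
  have := h.2.1 0 (by constructor <;> norm_num) t ht ht.1
  rwa [h.2.2.2.2.1] at this

lemma memA_M₂_le (h : memA M₁ f M₂ g) {t : ℝ} (ht : t ∈ Ico (0:ℝ) 1) : M₂ ≤ g t := by
  refine le_of_tendsto h.2.2.2.2.2.1 ?_
  have hmem : Set.Ioo t 1 ∈ nhdsWithin (1:ℝ) (Set.Iio 1) :=
    Ioo_mem_nhdsLT_of_mem ⟨ht.2, le_refl 1⟩
  filter_upwards [hmem] with s hs
  exact h.2.1 t ht s ⟨le_trans ht.1 hs.1.le, hs.2⟩ hs.1.le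

lemma memA_M₁_nonneg (h : memA M₁ f M₂ g) : 0 ≤ M₁ := by
  have := h.1 0 (by constructor <;> norm_num)
  rwa [h.2.2.2.2.1] at this

lemma memA_integrableOn (h : memA M₁ f M₂ g) : IntegrableOn g (Ioo 0 1) := by
  have hm : AEMeasurable g (volume.restrict (Ioo (0:ℝ) 1)) := by
    apply aemeasurable_restrict_of_antitoneOn measurableSet_Ioo
    intro s hs t ht hst
    exact h.2.1 s ⟨hs.1.le, hs.2⟩ t ⟨ht.1.le, ht.2⟩ hst
  refine Integrable.mono' (integrable_const M₁) hm.aestronglyMeasurable ?_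
  filter_upwards [ae_restrict_mem measurableSet_Ioo] with t ht
  rw [Real.norm_eq_abs, abs_of_nonneg (h.1 t ⟨ht.1.le, ht.2⟩)]
  exact memA_le_M₁ h ⟨ht.1.le, ht.2⟩

lemma memA_integrableOn_Ioo (h : memA M₁ f M₂ g) {s t : ℝ} (hs : 0 ≤ s) (ht : t ≤ 1) :
    IntegrableOn g (Ioo s t) :=
  (memA_integrableOn h).mono_set (Ioo_subset_Ioo hs ht)

lemma memA_add (h : memA M₁ f M₂ g) {s t r : ℝ} (h0 : 0 ≤ s) (hst : s ≤ t) (htr : t ≤ r)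
    (hr : r ≤ 1) :
    (∫ u in Ioo s r, g u) = (∫ u in Ioo s t, g u) + ∫ u in Ioo t r, g u := by
  rw [← integral_Ioc_eq_integral_Ioo, ← integral_Ioc_eq_integral_Ioo,
    ← integral_Ioc_eq_integral_Ioo, ← Set.Ioc_union_Ioc_eq_Ioc hst htr,
    setIntegral_union (Set.Ioc_disjoint_Ioc_of_le le_rfl) measurableSet_Ioc
      ((integrableOn_Ioc_iff_integrableOn_Ioo enorm_ne_top).mpr (memA_integrableOn_Ioo h h0 (htr.trans hr)))
      ((integrableOn_Ioc_iff_integrableOn_Ioo enorm_ne_top).mpr (memA_integrableOn_Ioo h (h0.trans hst) hr))]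

lemma int_Ioo_le {g : ℝ → ℝ} {s t C : ℝ} (hst : s ≤ t) (hint : IntegrableOn g (Set.Ioo s t))
    (hb : ∀ u ∈ Set.Ioo s t, g u ≤ C) : (∫ u in Set.Ioo s t, g u) ≤ C * (t - s) := by
  have := setIntegral_mono_on hint (integrableOn_const measure_Ioo_lt_top.ne)
    measurableSet_Ioo hb
  rwa [setIntegral_const, Real.volume_real_Ioo_of_le hst, smul_eq_mul,
    mul_comm] at this

lemma le_int_Ioo {g : ℝ → ℝ} {s t C : ℝ} (hst : s ≤ t) (hint : IntegrableOn g (Set.Ioo s t))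
    (hb : ∀ u ∈ Set.Ioo s t, C ≤ g u) : C * (t - s) ≤ ∫ u in Set.Ioo s t, g u := by
  have := setIntegral_mono_on (integrableOn_const measure_Ioo_lt_top.ne) hint
    measurableSet_Ioo hb
  rwa [setIntegral_const, Real.volume_real_Ioo_of_le hst, smul_eq_mul,
    mul_comm] at this

lemma memA_G_nonneg (h : memA M₁ f M₂ g) {t : ℝ} (h1 : t ≤ 1) :
    0 ≤ ∫ u in Ioo 0 t, g u := by
  refine setIntegral_nonneg measurableSet_Ioo fun u hu => h.1 u ⟨hu.1.le, lt_of_lt_of_le hu.2 h1⟩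

lemma memA_G_le_M₁ (h : memA M₁ f M₂ g) {t : ℝ} (h0 : 0 ≤ t) (h1 : t ≤ 1) :
    (∫ u in Ioo 0 t, g u) ≤ M₁ * t := by
  have := int_Ioo_le h0 (memA_integrableOn_Ioo h le_rfl h1)
    (fun u hu => memA_le_M₁ h ⟨hu.1.le, lt_of_lt_of_le hu.2 h1⟩)
  simpa using this

lemma memA_G_le2 (h : memA M₁ f M₂ g) {t : ℝ} (h0 : 0 ≤ t) (h1 : t ≤ 1) :
    (∫ u in Ioo 0 t, g u) ≤ f - M₂ * (1 - t) := by
  have hadd := memA_add h le_rfl h0 h1 le_rfl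
  rw [h.2.2.2.2.2.2] at hadd
  have hge : M₂ * (1 - t) ≤ ∫ u in Ioo t 1, g u :=
    le_int_Ioo h1 (memA_integrableOn_Ioo h h0 le_rfl)
      (fun u hu => memA_M₂_le h ⟨h0.trans hu.1.le, hu.2⟩)
  linarith

lemma memA_G_upper (h : memA M₁ f M₂ g) {s t : ℝ} (h0 : 0 ≤ s) (hs1 : s < 1) (hst : s ≤ t)
    (h1 : t ≤ 1) :
    (∫ u in Ioo 0 t, g u) ≤ (∫ u in Ioo 0 s, g u) + g s * (t - s) := by
  have hadd := memA_add h le_rfl h0 hst h1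
  have hb := int_Ioo_le hst (memA_integrableOn_Ioo h h0 h1)
    (fun u hu => h.2.1 s ⟨h0, hs1⟩ u ⟨h0.trans hu.1.le, lt_of_lt_of_le hu.2 h1⟩ hu.1.le)
  linarith

lemma memA_int_right_ge (h : memA M₁ f M₂ g) {s t : ℝ} (h0 : 0 ≤ s) (hst : s ≤ t)
    (h1 : t < 1) : g t * (t - s) ≤ ∫ u in Ioo s t, g u :=
  le_int_Ioo hst (memA_integrableOn_Ioo h h0 h1.le)
    (fun u hu => h.2.1 u ⟨h0.trans hu.1.le, hu.2.trans h1⟩ t ⟨h0.trans hst, h1⟩ hu.2.le)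

lemma memA_G_integrable (h : memA M₁ f M₂ g) :
    IntegrableOn (fun t => ∫ u in Ioo 0 t, g u) (Ioo 0 1) := by
  have hm : AEMeasurable (fun t => ∫ u in Ioo 0 t, g u) (volume.restrict (Ioo (0:ℝ) 1)) := by
    apply aemeasurable_restrict_of_monotoneOn measurableSet_Ioo
    intro s hs t ht hst
    simp only []
    rw [memA_add h le_rfl hs.1.le hst ht.2.le]
    have : 0 ≤ ∫ u in Ioo s t, g u :=
      setIntegral_nonneg measurableSet_Ioo fun u hu => h.1 u ⟨hs.1.le.trans hu.1.le, hu.2.trans ht.2⟩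
    linarith
  refine Integrable.mono' (integrable_const M₁) hm.aestronglyMeasurable ?_
  filter_upwards [ae_restrict_mem measurableSet_Ioo] with t ht
  rw [Real.norm_eq_abs, abs_of_nonneg (memA_G_nonneg h ht.2.le)]
  calc (∫ u in Ioo 0 t, g u) ≤ M₁ * t := memA_G_le_M₁ h ht.1.le ht.2.le
  _ ≤ M₁ * 1 := by nlinarith [memA_M₁_nonneg h, ht.2]
  _ = M₁ := mul_one _

lemma memA_Ig_integrable (h : memA M₁ f M₂ g) :
    IntegrableOn (fun t => (1/t) * ∫ u in Ioo 0 t, g u) (Ioo 0 1) := by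
  have hm : AEMeasurable (fun t => (1/t) * ∫ u in Ioo 0 t, g u)
      (volume.restrict (Ioo (0:ℝ) 1)) :=
    (measurable_const.div measurable_id).aemeasurable.mul (memA_G_integrable h).aemeasurable
  refine Integrable.mono' (integrable_const M₁) hm.aestronglyMeasurable ?_
  filter_upwards [ae_restrict_mem measurableSet_Ioo] with t ht
  have ht0 : 0 < t := ht.1
  rw [Real.norm_eq_abs, abs_of_nonneg (mul_nonneg (by positivity) (memA_G_nonneg h ht.2.le))]
  calc (1/t) * ∫ u in Ioo 0 t, g u ≤ (1/t) * (M₁ * t) := by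
        exact mul_le_mul_of_nonneg_left (memA_G_le_M₁ h ht0.le ht.2.le) (by positivity)
  _ = M₁ := by field_simp

lemma int_sub_left {a b : ℝ} (hab : a ≤ b) :
    (∫ s in Ioo a b, (s - a)) = (b - a)^2 / 2 := by
  rw [← integral_Ioc_eq_integral_Ioo, ← intervalIntegral.integral_of_le hab,
    intervalIntegral.integral_sub (continuous_id'.intervalIntegrable a b)
      (intervalIntegrable_const), integral_id, intervalIntegral.integral_const]
  simp only [smul_eq_mul]
  ring

lemma int_sub_right {a b : ℝ} (hab : a ≤ b) :
    (∫ s in Ioo a b, (b - s)) = (b - a)^2 / 2 := by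
  rw [← integral_Ioc_eq_integral_Ioo, ← intervalIntegral.integral_of_le hab,
    intervalIntegral.integral_sub (intervalIntegrable_const)
      (continuous_id'.intervalIntegrable a b), integral_id, intervalIntegral.integral_const]
  simp only [smul_eq_mul]
  ring

end Aux

set_option maxHeartbeats 2000000 in
theorem stmt11 (f M₁ M₂ : ℝ) (h1 : M₁ ≥ f) (h2 : f > M₂) (h3 : M₂ ≥ 0)
    (g : ℕ → ℝ → ℝ) (hg : ∀ n, memA M₁ f M₂ (g n))
    (hlim : Filter.Tendsto (fun n => Ig (g n)) Filter.atTop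
      (nhds (f + (f - M₂) * Real.log ((M₁ - M₂) / (f - M₂))))) :
    (∀ᵐ t ∂(volume.restrict (Set.Ico (0 : ℝ) 1)),
      Filter.Tendsto (fun n => g n t) Filter.atTop
        (nhds (if t ≤ (f - M₂) / (M₁ - M₂) then M₁ else M₂))) ∧
    Filter.Tendsto
      (fun n => ∫ t in Set.Ico (0 : ℝ) 1,
        |g n t - if t ≤ (f - M₂) / (M₁ - M₂) then M₁ else M₂|)
      Filter.atTop (nhds 0) := by
  have hM : M₂ < M₁ := lt_of_lt_of_le h2 h1
  set c : ℝ := (f - M₂) / (M₁ - M₂) with hc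
  have hc0 : 0 < c := div_pos (by linarith) (by linarith)
  have hc1 : c ≤ 1 := (div_le_one (by linarith)).mpr (by linarith)
  have hcM : c * (M₁ - M₂) = f - M₂ := div_mul_cancel₀ _ (by intro h; nlinarith [h] : (M₁ - M₂) ≠ 0)
  set G₀ : ℝ → ℝ := fun t => min (M₁ * t) (f - M₂ * (1 - t)) with hG₀
  have hG₀left : ∀ t : ℝ, t ≤ c → G₀ t = M₁ * t := fun t ht => min_eq_left (by nlinarith)
  have hG₀right : ∀ t : ℝ, c ≤ t → G₀ t = f - M₂ * (1 - t) :=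
    fun t ht => min_eq_right (by nlinarith)
  have hG₀nonneg : ∀ t ∈ Icc (0:ℝ) 1, 0 ≤ G₀ t := by
    intro t ht
    exact le_min (by nlinarith [ht.1]) (by nlinarith [mul_nonneg h3 ht.1])
  have hG₀cont : Continuous G₀ := Continuous.min (by continuity) (by continuity)
  have hG₀int : IntegrableOn G₀ (Ioo 0 1) :=
    (hG₀cont.integrableOn_Icc (a := 0) (b := 1)).mono_set Ioo_subset_Icc_self
  have hG₀le : ∀ t ∈ Ioo (0:ℝ) 1, G₀ t ≤ M₁ * t := fun t ht => min_le_left _ _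
  -- integrability of (1/t) * G₀ t
  have hIG₀int : IntegrableOn (fun t => (1/t) * G₀ t) (Ioo 0 1) := by
    have hm : AEMeasurable (fun t => (1/t) * G₀ t) (volume.restrict (Ioo (0:ℝ) 1)) :=
      (measurable_const.div measurable_id).aemeasurable.mul hG₀cont.measurable.aemeasurable
    refine Integrable.mono' (integrable_const M₁) hm.aestronglyMeasurable ?_
    filter_upwards [ae_restrict_mem measurableSet_Ioo] with t ht
    have ht0 : 0 < t := ht.1
    rw [Real.norm_eq_abs, abs_of_nonneg (mul_nonneg (by positivity)
      (hG₀nonneg t ⟨ht.1.le, ht.2.le⟩))]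
    calc (1/t) * G₀ t ≤ (1/t) * (M₁ * t) :=
          mul_le_mul_of_nonneg_left (hG₀le t ht) (by positivity)
    _ = M₁ := by field_simp
  set L : ℝ := f + (f - M₂) * Real.log ((M₁ - M₂) / (f - M₂)) with hLdef
  -- value of the extremal integral
  have hL : (∫ t in Ioo (0:ℝ) 1, (1/t) * G₀ t) = L := by
    have hsplit : (∫ t in Ioo (0:ℝ) 1, (1/t) * G₀ t)
        = (∫ t in Ioc (0:ℝ) c, (1/t) * G₀ t) + ∫ t in Ioc c 1, (1/t) * G₀ t := by
      rw [← integral_Ioc_eq_integral_Ioo, ← Set.Ioc_union_Ioc_eq_Ioc hc0.le hc1,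
        setIntegral_union (Set.Ioc_disjoint_Ioc_of_le le_rfl) measurableSet_Ioc
          ((integrableOn_Ioc_iff_integrableOn_Ioo enorm_ne_top).mpr (hIG₀int.mono_set (Ioo_subset_Ioo le_rfl hc1)))
          ((integrableOn_Ioc_iff_integrableOn_Ioo enorm_ne_top).mpr (hIG₀int.mono_set (Ioo_subset_Ioo hc0.le le_rfl)))]
    have hpart1 : (∫ t in Ioc (0:ℝ) c, (1/t) * G₀ t) = M₁ * c := by
      rw [setIntegral_congr_fun measurableSet_Ioc (g := fun _ => M₁) ?_]
      · rw [setIntegral_const, Real.volume_real_Ioc_of_le hc0.le, smul_eq_mul,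
          mul_comm]
        ring
      · intro t ht
        show 1 / t * G₀ t = M₁
        rw [hG₀left t ht.2, one_div, inv_mul_eq_div, mul_div_assoc,
          div_self (ne_of_gt ht.1), mul_one]
    have hpart2 : (∫ t in Ioc c 1, (1/t) * G₀ t) = (f - M₂) * Real.log (1/c) + M₂ * (1 - c) := by
      rw [setIntegral_congr_fun measurableSet_Ioc (g := fun t => (f - M₂) * (1/t) + M₂) ?_]
      · rw [← intervalIntegral.integral_of_le hc1]
        have hii : IntervalIntegrable (fun t => (f - M₂) * (1/t)) volume c 1 := by
          apply ContinuousOn.intervalIntegrable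
          apply ContinuousOn.mul continuousOn_const
          apply ContinuousOn.div continuousOn_const continuousOn_id
          intro x hx
          rw [Set.uIcc_of_le hc1] at hx
          exact ne_of_gt (lt_of_lt_of_le hc0 hx.1)
        rw [intervalIntegral.integral_add hii intervalIntegrable_const,
          intervalIntegral.integral_const_mul, integral_one_div
            (by rw [Set.uIcc_of_le hc1]; intro hx; exact absurd hx.1 (not_le.mpr hc0)),
          intervalIntegral.integral_const, smul_eq_mul]
        ring
      · intro t ht
        show 1 / t * G₀ t = (f - M₂) * (1/t) + M₂
        rw [hG₀right t ht.1.le]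
        have ht0 : t ≠ 0 := ne_of_gt (hc0.trans ht.1)
        field_simp
        ring
    rw [hsplit, hpart1, hpart2, hLdef,
      show Real.log (1/c) = Real.log ((M₁ - M₂)/(f - M₂)) from by rw [hc, one_div_div]]
    linear_combination hcM
  -- the deficiency functional
  set E : ℕ → ℝ := fun n => ∫ t in Ioo (0:ℝ) 1, (G₀ t - ∫ u in Ioo (0:ℝ) t, g n u) with hE
  have hGnle : ∀ n, ∀ t ∈ Icc (0:ℝ) 1, (∫ u in Ioo (0:ℝ) t, g n u) ≤ G₀ t := fun n t ht =>
    le_min (memA_G_le_M₁ (hg n) ht.1 ht.2) (memA_G_le2 (hg n) ht.1 ht.2)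
  have hDint : ∀ n, IntegrableOn (fun t => G₀ t - ∫ u in Ioo (0:ℝ) t, g n u) (Ioo 0 1) :=
    fun n => hG₀int.sub (memA_G_integrable (hg n))
  have hEnonneg : ∀ n, 0 ≤ E n := fun n =>
    setIntegral_nonneg measurableSet_Ioo fun t ht =>
      sub_nonneg.mpr (hGnle n t ⟨ht.1.le, ht.2.le⟩)
  have hEleD : ∀ n, E n ≤ L - Ig (g n) := by
    intro n
    have hint2 : IntegrableOn
        (fun t => (1/t) * G₀ t - (1/t) * ∫ u in Ioo (0:ℝ) t, g n u) (Ioo 0 1) :=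
      hIG₀int.sub (memA_Ig_integrable (hg n))
    have hmono : E n ≤ ∫ t in Ioo (0:ℝ) 1,
        ((1/t) * G₀ t - (1/t) * ∫ u in Ioo (0:ℝ) t, g n u) := by
      refine setIntegral_mono_on (hDint n) hint2 measurableSet_Ioo ?_
      intro t ht
      have h1t : 1 ≤ 1/t := by rw [le_div_iff₀ ht.1]; linarith [ht.2]
      have hd : 0 ≤ G₀ t - ∫ u in Ioo (0:ℝ) t, g n u :=
        sub_nonneg.mpr (hGnle n t ⟨ht.1.le, ht.2.le⟩)
      have : (1:ℝ) * (G₀ t - ∫ u in Ioo (0:ℝ) t, g n u)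
          ≤ (1/t) * (G₀ t - ∫ u in Ioo (0:ℝ) t, g n u) :=
        mul_le_mul_of_nonneg_right h1t hd
      rw [one_mul] at this
      calc G₀ t - (∫ u in Ioo (0:ℝ) t, g n u)
          ≤ (1/t) * (G₀ t - ∫ u in Ioo (0:ℝ) t, g n u) := this
      _ = (1/t) * G₀ t - (1/t) * ∫ u in Ioo (0:ℝ) t, g n u := by ring
    have heq : (∫ t in Ioo (0:ℝ) 1,
        ((1/t) * G₀ t - (1/t) * ∫ u in Ioo (0:ℝ) t, g n u)) = L - Ig (g n) := by
      rw [integral_sub hIG₀int (memA_Ig_integrable (hg n)), hL]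
      rfl
    exact hmono.trans heq.le
  have hE0 : Tendsto E atTop (nhds 0) := by
    have hD0 : Tendsto (fun n => L - Ig (g n)) atTop (nhds 0) := by
      have := (tendsto_const_nhds : Tendsto (fun _ : ℕ => L) atTop (nhds L)).sub hlim
      simpa using this
    exact tendsto_of_tendsto_of_tendsto_of_le_of_le tendsto_const_nhds hD0 hEnonneg hEleD
  -- quantitative pointwise estimates
  have key1 : ∀ t : ℝ, 0 ≤ t → t < min c 1 → ∀ n,
      (M₁ - g n t) * ((min c 1 - t)^2/2) ≤ E n := by
    intro t h0 htc n
    have ht1 : t < 1 := lt_of_lt_of_le htc (min_le_right _ _)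
    have hc'le1 : min c 1 ≤ 1 := min_le_right _ _
    have step1 : ∀ s ∈ Ioo t (min c 1), (M₁ - g n t) * (s - t) ≤
        G₀ s - ∫ u in Ioo (0:ℝ) s, g n u := by
      intro s hs
      have hsc : s ≤ c := hs.2.le.trans (min_le_left _ _)
      have hA := memA_G_upper (hg n) h0 ht1 hs.1.le (hs.2.le.trans hc'le1)
      have hB := memA_G_le_M₁ (hg n) h0 ht1.le
      rw [hG₀left s hsc]
      have e : (M₁ - g n t) * (s - t) = M₁ * s - M₁ * t - g n t * (s - t) := by ring
      linarith [hA, hB, e.le, e.ge]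
    have step2 : (∫ s in Ioo t (min c 1), (M₁ - g n t) * (s - t)) ≤
        ∫ s in Ioo t (min c 1), (G₀ s - ∫ u in Ioo (0:ℝ) s, g n u) :=
      setIntegral_mono_on
        (((continuous_const.mul (continuous_id.sub continuous_const)).integrableOn_Icc
            (a := t) (b := min c 1)).mono_set Ioo_subset_Icc_self)
        ((hDint n).mono_set (Ioo_subset_Ioo h0 hc'le1)) measurableSet_Ioo step1
    have step3 : (∫ s in Ioo t (min c 1), (G₀ s - ∫ u in Ioo (0:ℝ) s, g n u)) ≤ E n := by
      refine setIntegral_mono_set (hDint n) ?_ (HasSubset.Subset.eventuallyLE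
        (Ioo_subset_Ioo h0 hc'le1))
      filter_upwards [ae_restrict_mem measurableSet_Ioo] with u hu
      exact sub_nonneg.mpr (hGnle n u ⟨hu.1.le, hu.2.le⟩)
    have step0 : (∫ s in Ioo t (min c 1), (M₁ - g n t) * (s - t))
        = (M₁ - g n t) * ((min c 1 - t)^2/2) := by
      rw [MeasureTheory.integral_const_mul, int_sub_left (le_of_lt htc)]
    linarith [step0.ge.trans (step2.trans step3)]
  have key2 : ∀ t : ℝ, c < t → t < 1 → ∀ n,
      (g n t - M₂) * ((t - c)^2/2) ≤ E n := by
    intro t htc ht1 n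
    have step1 : ∀ s ∈ Ioo c t, (g n t - M₂) * (t - s) ≤
        G₀ s - ∫ u in Ioo (0:ℝ) s, g n u := by
      intro s hs
      have hs0 : 0 ≤ s := hc0.le.trans hs.1.le
      have hs1 : s ≤ 1 := (hs.2.trans ht1).le
      have hsplit1 : (∫ u in Ioo (0:ℝ) 1, g n u)
          = (∫ u in Ioo (0:ℝ) s, g n u) + ∫ u in Ioo s 1, g n u :=
        memA_add (hg n) le_rfl hs0 hs1 le_rfl
      have hsplit2 : (∫ u in Ioo s 1, g n u)
          = (∫ u in Ioo s t, g n u) + ∫ u in Ioo t 1, g n u :=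
        memA_add (hg n) hs0 hs.2.le ht1.le le_rfl
      have hst : g n t * (t - s) ≤ ∫ u in Ioo s t, g n u :=
        memA_int_right_ge (hg n) hs0 hs.2.le ht1
      have ht1' : M₂ * (1 - t) ≤ ∫ u in Ioo t 1, g n u :=
        le_int_Ioo ht1.le (memA_integrableOn_Ioo (hg n) (hs0.trans hs.2.le) le_rfl)
          (fun u hu => memA_M₂_le (hg n) ⟨(hs0.trans hs.2.le).trans hu.1.le, hu.2⟩)
      have hf := (hg n).2.2.2.2.2.2
      rw [hG₀right s hs.1.le]
      rw [hf] at hsplit1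
      have e : M₂ * (t - s) = M₂ * (1 - s) - M₂ * (1 - t) := by ring
      have e2 : (g n t - M₂) * (t - s) = g n t * (t - s) - M₂ * (t - s) := by ring
      linarith [hsplit1, hsplit2, hst, ht1', e, e2]
    have step2 : (∫ s in Ioo c t, (g n t - M₂) * (t - s)) ≤
        ∫ s in Ioo c t, (G₀ s - ∫ u in Ioo (0:ℝ) s, g n u) :=
      setIntegral_mono_on
        (((continuous_const.mul (continuous_const.sub continuous_id)).integrableOn_Icc
            (a := c) (b := t)).mono_set Ioo_subset_Icc_self)
        ((hDint n).mono_set (Ioo_subset_Ioo hc0.le ht1.le)) measurableSet_Ioo step1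
    have step3 : (∫ s in Ioo c t, (G₀ s - ∫ u in Ioo (0:ℝ) s, g n u)) ≤ E n := by
      refine setIntegral_mono_set (hDint n) ?_ (HasSubset.Subset.eventuallyLE
        (Ioo_subset_Ioo hc0.le ht1.le))
      filter_upwards [ae_restrict_mem measurableSet_Ioo] with u hu
      exact sub_nonneg.mpr (hGnle n u ⟨hu.1.le, hu.2.le⟩)
    have step0 : (∫ s in Ioo c t, (g n t - M₂) * (t - s))
        = (g n t - M₂) * ((t - c)^2/2) := by
      rw [MeasureTheory.integral_const_mul, int_sub_right (le_of_lt htc)]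
    linarith [step0.ge.trans (step2.trans step3)]
  -- a.e. pointwise convergence
  have hae_ne : ∀ᵐ t ∂(volume.restrict (Ico (0:ℝ) 1)), t ≠ c := by
    refine (ae_iff).mpr ?_
    have hset : {t : ℝ | ¬ t ≠ c} = {c} := by ext x; simp [not_not]
    rw [hset, Measure.restrict_apply (measurableSet_singleton c)]
    exact measure_mono_null inter_subset_left Real.volume_singleton
  have part1 : ∀ᵐ t ∂(volume.restrict (Set.Ico (0 : ℝ) 1)),
      Filter.Tendsto (fun n => g n t) Filter.atTop (nhds (if t ≤ c then M₁ else M₂)) := by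
    filter_upwards [hae_ne, ae_restrict_mem measurableSet_Ico] with t htne htmem
    by_cases htc : t ≤ c
    · rw [if_pos htc]
      have htlt : t < c := lt_of_le_of_ne htc htne
      have htc' : t < min c 1 := lt_min htlt htmem.2
      have hdpos : (0:ℝ) < (min c 1 - t)^2/2 := by
        have := sub_pos.mpr htc'
        positivity
      refine tendsto_of_tendsto_of_tendsto_of_le_of_le
        (g := fun n => M₁ - E n / ((min c 1 - t)^2/2)) (h := fun _ => M₁) ?_
        tendsto_const_nhds ?_ ?_
      · have h2' := hE0.div_const ((min c 1 - t)^2/2)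
        rw [zero_div] at h2'
        simpa using (tendsto_const_nhds : Tendsto (fun _ : ℕ => M₁) atTop (nhds M₁)).sub h2'
      · intro n
        have hq : M₁ - g n t ≤ E n / ((min c 1 - t)^2/2) :=
          (le_div_iff₀ hdpos).mpr (key1 t htmem.1 htc' n)
        linarith
      · intro n; exact memA_le_M₁ (hg n) htmem
    · rw [if_neg htc]
      have htlt : c < t := lt_of_not_ge htc
      have hdpos : (0:ℝ) < (t - c)^2/2 := by
        have := sub_pos.mpr htlt
        positivity
      refine tendsto_of_tendsto_of_tendsto_of_le_of_le (g := fun _ => M₂)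
        (h := fun n => M₂ + E n / ((t - c)^2/2)) tendsto_const_nhds ?_ ?_ ?_
      · have h2' := hE0.div_const ((t - c)^2/2)
        rw [zero_div] at h2'
        simpa using (tendsto_const_nhds : Tendsto (fun _ : ℕ => M₂) atTop (nhds M₂)).add h2'
      · intro n; exact memA_M₂_le (hg n) htmem
      · intro n
        have hq : g n t - M₂ ≤ E n / ((t - c)^2/2) :=
          (le_div_iff₀ hdpos).mpr (key2 t htlt htmem.2 n)
        linarith
  refine ⟨part1, ?_⟩
  -- L¹ convergence by dominated convergence
  have htgt_meas : Measurable (fun t : ℝ => if t ≤ c then M₁ else M₂) :=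
    Measurable.ite measurableSet_Iic measurable_const measurable_const
  have hconv := MeasureTheory.tendsto_integral_of_dominated_convergence
    (μ := volume.restrict (Set.Ico (0:ℝ) 1))
    (F := fun n t => |g n t - if t ≤ c then M₁ else M₂|) (f := fun _ => 0)
    (bound := fun _ => M₁) ?_ ?_ ?_ ?_
  · simpa using hconv
  · intro n
    have hgm : AEMeasurable (g n) (volume.restrict (Ico (0:ℝ) 1)) :=
      aemeasurable_restrict_of_antitoneOn measurableSet_Ico
        (fun s hs t ht hst => (hg n).2.1 s hs t ht hst)
    exact ((hgm.sub htgt_meas.aemeasurable).aestronglyMeasurable).norm.congr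
      (Filter.Eventually.of_forall fun t => (Real.norm_eq_abs _))
  · exact integrable_const M₁
  · intro n
    filter_upwards [ae_restrict_mem measurableSet_Ico] with t ht
    have hb1 := memA_le_M₁ (hg n) ht
    have hb2 := (hg n).1 t ht
    rw [Real.norm_eq_abs, abs_abs]
    rw [abs_le]
    constructor
    · by_cases hcc : t ≤ c
      · rw [if_pos hcc]; linarith
      · rw [if_neg hcc]; linarith
    · by_cases hcc : t ≤ c
      · rw [if_pos hcc]; linarith
      · rw [if_neg hcc]; linarith
  · filter_upwards [part1] with t htt
    have := (htt.sub (tendsto_const_nhds : Tendsto (fun _ : ℕ => if t ≤ c then M₁ else M₂)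
      atTop (nhds (if t ≤ c then M₁ else M₂)))).abs
    simpa using this
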